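/- Let f : I → I be continuous on a compact interval. If f has a periodic point of least period 3, then f has periodic points of every least period n ≥ 1. -/

import Mathlib

open Set

/-- Oriented covering lemma: if `f s = c`, `f t = d` with `c ≤ d`, then there is a
subinterval of `[s,t]` mapping exactly onto `[c,d]`. -/
lemma tube_oriented {f : ℝ → ℝ} {s t c d : ℝ} (hst : s ≤ t)
    (hf : ContinuousOn f (Icc s t)) (hcd : c ≤ d) (hfs : f s = c) (hft : f t = d) :
    ∃ u v, s ≤ u ∧ u ≤ v ∧ v ≤ t ∧ f '' Icc u v = Icc c d := by
  set S : Set ℝ := Icc s t ∩ f ⁻¹' {c} with hS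
  have hSclosed : IsClosed S := hf.preimage_isClosed_of_isClosed isClosed_Icc isClosed_singleton
  have hsS : s ∈ S := ⟨⟨le_refl s, hst⟩, hfs⟩
  have hSbdd : BddAbove S := ⟨t, fun x hx => hx.1.2⟩
  set u := sSup S with hu
  have huS : u ∈ S := hSclosed.csSup_mem ⟨s, hsS⟩ hSbdd
  have hsu : s ≤ u := le_csSup hSbdd hsS
  have hut : u ≤ t := huS.1.2
  have hfu : f u = c := huS.2
  set T : Set ℝ := Icc u t ∩ f ⁻¹' {d} with hT
  have hTclosed : IsClosed T :=
    (hf.mono (Icc_subset_Icc hsu le_rfl)).preimage_isClosed_of_isClosed isClosed_Icc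
      isClosed_singleton
  have htT : t ∈ T := ⟨⟨hut, le_refl t⟩, hft⟩
  have hTbdd : BddBelow T := ⟨u, fun x hx => hx.1.1⟩
  set v := sInf T with hv
  have hvT : v ∈ T := hTclosed.csInf_mem ⟨t, htT⟩ hTbdd
  have huv : u ≤ v := hvT.1.1
  have hvt : v ≤ t := hvT.1.2
  have hfv : f v = d := hvT.2
  have hsub : Icc u v ⊆ Icc s t := Icc_subset_Icc hsu hvt
  have hf' : ContinuousOn f (Icc u v) := hf.mono hsub
  refine ⟨u, v, hsu, huv, hvt, Set.Subset.antisymm ?_ ?_⟩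
  · rintro w ⟨z, hz, rfl⟩
    constructor
    · by_contra h
      push_neg at h
      have hmem : c ∈ Icc (f z) (f v) := ⟨h.le, by rw [hfv]; exact hcd⟩
      have : c ∈ f '' Icc z v :=
        intermediate_value_Icc hz.2 (hf'.mono (Icc_subset_Icc hz.1 le_rfl)) hmem
      obtain ⟨z', hz', hfz'⟩ := this
      have hz'S : z' ∈ S := ⟨⟨hsu.trans (hz.1.trans hz'.1), hz'.2.trans hvt⟩, hfz'⟩
      have hz'u : z' ≤ u := le_csSup hSbdd hz'S
      have : z = u := le_antisymm (hz'.1.trans hz'u) hz.1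
      rw [this, hfu] at h
      exact lt_irrefl c h
    · by_contra h
      push_neg at h
      have hmem : d ∈ Icc (f u) (f z) := ⟨by rw [hfu]; exact hcd, h.le⟩
      have : d ∈ f '' Icc u z :=
        intermediate_value_Icc hz.1 (hf'.mono (Icc_subset_Icc le_rfl hz.2)) hmem
      obtain ⟨z', hz', hfz'⟩ := this
      have hz'T : z' ∈ T := ⟨⟨hz'.1, (hz'.2.trans hz.2).trans hvt⟩, hfz'⟩
      have hvz' : v ≤ z' := csInf_le hTbdd hz'T
      have : z = v := le_antisymm hz.2 (hvz'.trans hz'.2)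
      rw [this, hfv] at h
      exact lt_irrefl d h
  · have := intermediate_value_Icc huv hf'
    rw [hfu, hfv] at this
    exact this

/-- Covering lemma: if `c ≤ d` are both attained by `f` on `[s,t]`, there is a
subinterval of `[s,t]` mapping exactly onto `[c,d]`. -/
lemma tube {f : ℝ → ℝ} {s t c d : ℝ} (hst : s ≤ t)
    (hf : ContinuousOn f (Icc s t)) (hcd : c ≤ d)
    (hc : c ∈ f '' Icc s t) (hd : d ∈ f '' Icc s t) :
    ∃ u v, s ≤ u ∧ u ≤ v ∧ v ≤ t ∧ f '' Icc u v = Icc c d := by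
  obtain ⟨s₀, hs₀, hfs₀⟩ := hc
  obtain ⟨t₀, ht₀, hft₀⟩ := hd
  rcases le_total s₀ t₀ with h | h
  · obtain ⟨u, v, h1, h2, h3, h4⟩ :=
      tube_oriented h (hf.mono (Icc_subset_Icc hs₀.1 ht₀.2)) hcd hfs₀ hft₀
    exact ⟨u, v, hs₀.1.trans h1, h2, h3.trans ht₀.2, h4⟩
  · -- reversed orientation: conjugate by reflection x ↦ t₀ + s₀ - x
    set g : ℝ → ℝ := fun x => f (t₀ + s₀ - x) with hg
    have hmapsrefl : MapsTo (fun x => t₀ + s₀ - x) (Icc t₀ s₀) (Icc t₀ s₀) := by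
      intro x hx
      exact ⟨by simp only; linarith [hx.2], by simp only; linarith [hx.1]⟩
    have hgc : ContinuousOn g (Icc t₀ s₀) := by
      apply ContinuousOn.comp (hf.mono (Icc_subset_Icc ht₀.1 hs₀.2))
        ((continuous_const.sub continuous_id).continuousOn) hmapsrefl
    have hgt₀ : g t₀ = c := by simp [hg, hfs₀]
    have hgs₀ : g s₀ = d := by simp [hg, hft₀]
    obtain ⟨u, v, h1, h2, h3, h4⟩ := tube_oriented h hgc hcd hgt₀ hgs₀
    refine ⟨t₀ + s₀ - v, t₀ + s₀ - u, by linarith [ht₀.1, hs₀.2], by linarith,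
      by linarith [ht₀.1, hs₀.2], ?_⟩
    have himg : Icc (t₀ + s₀ - v) (t₀ + s₀ - u) = (fun x => (t₀ + s₀) - x) '' Icc u v := by
      rw [Set.image_const_sub_Icc]
    rw [himg, ← Set.image_comp] at *
    rw [← h4]
    rfl

/-- Fixed point lemma. -/
lemma fix_lemma {g : ℝ → ℝ} {u v c d : ℝ} (huv : u ≤ v) (hg : ContinuousOn g (Icc u v))
    (himg : g '' Icc u v = Icc c d) (hcu : c ≤ u) (hvd : v ≤ d) :
    ∃ z ∈ Icc u v, g z = z := by
  have hcd : c ≤ d := hcu.trans (huv.trans hvd)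
  have hc : c ∈ g '' Icc u v := by rw [himg]; exact ⟨le_rfl, hcd⟩
  have hd : d ∈ g '' Icc u v := by rw [himg]; exact ⟨hcd, le_rfl⟩
  obtain ⟨z₁, hz₁, hgz₁⟩ := hc
  obtain ⟨z₂, hz₂, hgz₂⟩ := hd
  have hsub : uIcc z₁ z₂ ⊆ Icc u v := uIcc_subset_Icc hz₁ hz₂
  have hcont : ContinuousOn (fun x => g x - x) (uIcc z₁ z₂) :=
    (hg.mono hsub).sub continuousOn_id
  have h0 : (0 : ℝ) ∈ uIcc (g z₁ - z₁) (g z₂ - z₂) := by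
    apply Set.mem_uIcc.mpr
    left
    constructor
    · rw [hgz₁]; linarith [hz₁.1]
    · rw [hgz₂]; linarith [hz₂.2]
  obtain ⟨z, hz, hgz⟩ := intermediate_value_uIcc hcont h0
  exact ⟨z, hsub hz, by linarith [sub_eq_zero.mp hgz]⟩

lemma iter_cont {a b : ℝ} {f : ℝ → ℝ} (hf : ContinuousOn f (Icc a b))
    (hmaps : MapsTo f (Icc a b) (Icc a b)) :
    ∀ m : ℕ, ContinuousOn (f^[m]) (Icc a b) := by
  intro m
  induction m with
  | zero => simpa using continuousOn_id
  | succ k ih =>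
    rw [Function.iterate_succ]
    exact ContinuousOn.comp ih hf hmaps

/-- Chain of nested intervals staying in `[q,r]` with exact image `[q,r]` after `m` steps. -/
lemma chain {a b q r : ℝ} {f : ℝ → ℝ} (hf : ContinuousOn f (Icc a b))
    (hmaps : MapsTo f (Icc a b) (Icc a b))
    (hqr : q ≤ r) (hI0 : Icc q r ⊆ Icc a b)
    (hq' : q ∈ f '' Icc q r) (hr' : r ∈ f '' Icc q r) :
    ∀ m : ℕ, ∃ u v, q ≤ u ∧ u ≤ v ∧ v ≤ r ∧
      (∀ k, k < m → f^[k] '' Icc u v ⊆ Icc q r) ∧ f^[m] '' Icc u v = Icc q r := by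
  intro m
  induction m with
  | zero =>
    exact ⟨q, r, le_rfl, hqr, le_rfl, fun k hk => absurd hk (Nat.not_lt_zero k), by simp⟩
  | succ m ih =>
    obtain ⟨u, v, h1, h2, h3, hinter, himg⟩ := ih
    -- subinterval of [q,r] mapping onto [q,r]
    obtain ⟨α, β, g1, g2, g3, gimg⟩ := tube hqr (hf.mono hI0) hqr hq' hr'
    -- pull back through f^[m]
    have hcont : ContinuousOn (f^[m]) (Icc u v) :=
      (iter_cont hf hmaps m).mono ((Icc_subset_Icc h1 h3).trans hI0)
    have hα : α ∈ f^[m] '' Icc u v := by rw [himg]; exact ⟨g1, g2.trans g3⟩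
    have hβ : β ∈ f^[m] '' Icc u v := by rw [himg]; exact ⟨g1.trans g2, g3⟩
    obtain ⟨u₁, v₁, k1, k2, k3, kimg⟩ := tube h2 hcont g2 hα hβ
    refine ⟨u₁, v₁, h1.trans k1, k2, k3.trans h3, ?_, ?_⟩
    · intro k hk
      rcases Nat.lt_succ_iff_lt_or_eq.mp hk with h | h
      · exact (Set.image_mono (f := f^[k]) (Icc_subset_Icc k1 k3)).trans (hinter k h)
      · subst h
        rw [kimg]
        exact Icc_subset_Icc g1 g3
    · rw [Function.iterate_succ', Set.image_comp, kimg, gimg]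

/-- Main lemma, standard orientation: `p < q < r` with `f p = q`, `f q = r`, `f r = p`. -/
lemma period_main (a b : ℝ) (f : ℝ → ℝ) (hf : ContinuousOn f (Set.Icc a b))
    (hmaps : Set.MapsTo f (Set.Icc a b) (Set.Icc a b))
    (p q r : ℝ) (hp : p ∈ Icc a b) (hr : r ∈ Icc a b) (hpq : p < q) (hqr : q < r)
    (hfp : f p = q) (hfq : f q = r) (hfr : f r = p) :
    ∀ n : ℕ, 1 ≤ n →
      ∃ y ∈ Set.Icc a b, f^[n] y = y ∧ ∀ i, 0 < i → i < n → f^[i] y ≠ y := by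
  have hq : q ∈ Icc a b := ⟨hp.1.trans hpq.le, hqr.le.trans hr.2⟩
  have hI0 : Icc q r ⊆ Icc a b := Icc_subset_Icc hq.1 hr.2
  have hI1 : Icc p q ⊆ Icc a b := Icc_subset_Icc hp.1 hq.2
  -- attained values
  have hrI0 : r ∈ f '' Icc q r := ⟨q, ⟨le_rfl, hqr.le⟩, hfq⟩
  have hpI0 : p ∈ f '' Icc q r := ⟨r, ⟨hqr.le, le_rfl⟩, hfr⟩
  have hqI0 : q ∈ f '' Icc q r := by
    have := intermediate_value_Icc' hqr.le (hf.mono hI0)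
    rw [hfq, hfr] at this
    exact this ⟨hpq.le, hqr.le⟩
  have hqI1 : q ∈ f '' Icc p q := ⟨p, ⟨le_rfl, hpq.le⟩, hfp⟩
  have hrI1 : r ∈ f '' Icc p q := ⟨q, ⟨hpq.le, le_rfl⟩, hfq⟩
  intro n hn
  rcases Nat.lt_or_ge n 2 with h2 | h2
  · -- n = 1 : fixed point
    have hn1 : n = 1 := by omega
    subst hn1
    obtain ⟨u, v, h1, h2, h3, himg⟩ := tube hqr.le (hf.mono hI0) hqr.le hqI0 hrI0
    obtain ⟨z, hz, hfz⟩ := fix_lemma h2 ((hf.mono hI0).mono (Icc_subset_Icc h1 h3)) himg h1 h3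
    exact ⟨z, hI0 (Icc_subset_Icc h1 h3 hz), by simpa using hfz, fun i hi0 hin => by omega⟩
  · obtain ⟨m, rfl⟩ : ∃ m, n = m + 2 := ⟨n - 2, by omega⟩
    obtain ⟨u, v, h1, h2, h3, hinter, himg⟩ := chain hf hmaps hqr.le hI0 hqI0 hrI0 m
    -- step A: subinterval of [q,r] mapping onto [p,q]
    obtain ⟨α, β, a1, a2, a3, aimg⟩ := tube hqr.le (hf.mono hI0) hpq.le hpI0 hqI0
    -- step B: pull back through f^[m]
    have hcuv : Icc u v ⊆ Icc a b := (Icc_subset_Icc h1 h3).trans hI0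
    have hcont : ContinuousOn (f^[m]) (Icc u v) := (iter_cont hf hmaps m).mono hcuv
    have hα : α ∈ f^[m] '' Icc u v := by rw [himg]; exact ⟨a1, a2.trans a3⟩
    have hβ : β ∈ f^[m] '' Icc u v := by rw [himg]; exact ⟨a1.trans a2, a3⟩
    obtain ⟨u₁, v₁, b1, b2, b3, bimg⟩ := tube h2 hcont a2 hα hβ
    have himg1 : f^[m + 1] '' Icc u₁ v₁ = Icc p q := by
      rw [Function.iterate_succ', Set.image_comp, bimg, aimg]
    -- step C: subinterval of [p,q] mapping onto [q,r]
    obtain ⟨γ, δ, c1, c2, c3, cimg⟩ := tube hpq.le (hf.mono hI1) hqr.le hqI1 hrI1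
    -- step D: pull back through f^[m+1]
    have hcuv1 : Icc u₁ v₁ ⊆ Icc a b := (Icc_subset_Icc (h1.trans b1) (b3.trans h3)).trans hI0
    have hcont1 : ContinuousOn (f^[m + 1]) (Icc u₁ v₁) := (iter_cont hf hmaps (m + 1)).mono hcuv1
    have hγ : γ ∈ f^[m + 1] '' Icc u₁ v₁ := by rw [himg1]; exact ⟨c1, c2.trans c3⟩
    have hδ : δ ∈ f^[m + 1] '' Icc u₁ v₁ := by rw [himg1]; exact ⟨c1.trans c2, c3⟩
    obtain ⟨u₂, v₂, d1, d2, d3, dimg⟩ := tube b2 hcont1 c2 hγ hδ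
    have himg2 : f^[m + 2] '' Icc u₂ v₂ = Icc q r := by
      rw [Function.iterate_succ', Set.image_comp, dimg, cimg]
    -- fixed point of f^[m+2]
    have hq2 : q ≤ u₂ := h1.trans (b1.trans d1)
    have hv2 : v₂ ≤ r := (d3.trans b3).trans h3
    have hsub2 : Icc u₂ v₂ ⊆ Icc a b := (Icc_subset_Icc hq2 hv2).trans hI0
    obtain ⟨y, hy, hfy⟩ := fix_lemma d2 ((iter_cont hf hmaps (m + 2)).mono hsub2) himg2 hq2 hv2
    -- properties of the orbit of y
    have hk : ∀ k, k ≤ m → f^[k] y ∈ Icc q r := by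
      intro k hkm
      rcases Nat.lt_or_ge k m with h | h
      · exact hinter k h
          (Set.mem_image_of_mem _ (Icc_subset_Icc (b1.trans d1) (d3.trans b3) hy))
      · have hkm' : k = m := by omega
        subst hkm'
        have : f^[k] y ∈ Icc α β := by
          rw [← bimg]
          exact Set.mem_image_of_mem _ (Icc_subset_Icc d1 d3 hy)
        exact Icc_subset_Icc a1 a3 this
    have hm1 : f^[m + 1] y ∈ Icc p q := by
      have : f^[m + 1] y ∈ Icc γ δ := by
        rw [← dimg]
        exact Set.mem_image_of_mem _ hy
      exact Icc_subset_Icc c1 c3 this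
    refine ⟨y, hsub2 hy, hfy, ?_⟩
    intro i hi0 hin hiy
    have hper : Function.IsPeriodicPt f i y := hiy
    have hj : (m + 1) % i ≤ m := by
      have := Nat.mod_lt (m + 1) hi0
      omega
    have hrewrite : f^[(m + 1) % i] y = f^[m + 1] y := hper.iterate_mod_apply (m + 1)
    have hjmem : f^[(m + 1) % i] y ∈ Icc q r := hk _ hj
    have hEq : f^[m + 1] y = q := le_antisymm hm1.2 (by rw [← hrewrite] at *; exact hjmem.1)
    have hyr : y = r := by
      have : f^[m + 2] y = f (f^[m + 1] y) := Function.iterate_succ_apply' f (m + 1) y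
      rw [hfy, hEq, hfq] at this
      exact this
    rcases Nat.eq_zero_or_pos m with hm | hm
    · subst hm
      have hi1 : i = 1 := by omega
      subst hi1
      have : f^[0 + 1] y = f^[1] y := rfl
      have hq_eq : f y = q := by simpa using hEq
      have : f y = y := by simpa using hiy
      rw [hq_eq] at this
      rw [← this] at hyr
      exact absurd hyr (ne_of_lt hqr)
    · have h1y : f^[1] y ∈ Icc q r := hk 1 hm
      have : f^[1] y = p := by
        rw [Function.iterate_one, hyr, hfr]
      rw [this] at h1y
      exact absurd h1y.1 (not_le.mpr hpq)

lemma iter_neg (f : ℝ → ℝ) : ∀ (n : ℕ) (x : ℝ), (fun x => -(f (-x)))^[n] x = -(f^[n] (-x)) := by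
  intro n
  induction n with
  | zero => intro x; simp
  | succ k ih =>
    intro x
    rw [Function.iterate_succ_apply, Function.iterate_succ_apply]
    rw [ih]
    simp

/-- Main lemma, mirrored orientation: `p < q < r` with `f p = r`, `f q = p`, `f r = q`. -/
lemma period_mainNeg (a b : ℝ) (f : ℝ → ℝ) (hf : ContinuousOn f (Set.Icc a b))
    (hmaps : Set.MapsTo f (Set.Icc a b) (Set.Icc a b))
    (p q r : ℝ) (hp : p ∈ Icc a b) (hr : r ∈ Icc a b) (hpq : p < q) (hqr : q < r)
    (hfp : f p = r) (hfq : f q = p) (hfr : f r = q) :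
    ∀ n : ℕ, 1 ≤ n →
      ∃ y ∈ Set.Icc a b, f^[n] y = y ∧ ∀ i, 0 < i → i < n → f^[i] y ≠ y := by
  set g : ℝ → ℝ := fun x => -(f (-x)) with hg
  have hmapsneg : MapsTo (fun x : ℝ => -x) (Icc (-b) (-a)) (Icc a b) := by
    intro x hx
    exact ⟨by simp only; linarith [hx.2], by simp only; linarith [hx.1]⟩
  have hgc : ContinuousOn g (Icc (-b) (-a)) := by
    apply ContinuousOn.neg
    exact ContinuousOn.comp hf continuous_neg.continuousOn hmapsneg
  have hgmaps : MapsTo g (Icc (-b) (-a)) (Icc (-b) (-a)) := by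
    intro x hx
    have := hmaps (hmapsneg hx)
    exact ⟨by simp only [hg]; linarith [this.2], by simp only [hg]; linarith [this.1]⟩
  have hpmem : -r ∈ Icc (-b) (-a) := ⟨by linarith [hr.2], by linarith [hr.1]⟩
  have hrmem : -p ∈ Icc (-b) (-a) := ⟨by linarith [hp.2], by linarith [hp.1]⟩
  have e1 : g (-r) = -q := by simp [hg, hfr]
  have e2 : g (-q) = -p := by simp [hg, hfq]
  have e3 : g (-p) = -r := by simp [hg, hfp]
  intro n hn
  obtain ⟨y', hy'mem, hy'per, hy'least⟩ :=
    period_main (-b) (-a) g hgc hgmaps (-r) (-q) (-p) hpmem hrmem (by linarith) (by linarith)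
      e1 e2 e3 n hn
  refine ⟨-y', ⟨by linarith [hy'mem.2], by linarith [hy'mem.1]⟩, ?_, ?_⟩
  · have := iter_neg f n y'
    rw [← hg] at this
    rw [hy'per] at this
    linarith [this]
  · intro i hi0 hin hcon
    apply hy'least i hi0 hin
    have := iter_neg f i y'
    rw [← hg, hcon] at this
    simpa using this

/-- If f has a periodic point of least period 3, then f has periodic points
of every least period n ≥ 1. -/
theorem stmt_5 (a b : ℝ) (hab : a ≤ b) (f : ℝ → ℝ)
    (hf : ContinuousOn f (Set.Icc a b))
    (hmaps : Set.MapsTo f (Set.Icc a b) (Set.Icc a b))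
    (hx : ∃ x ∈ Set.Icc a b, f^[3] x = x ∧ ∀ i, 0 < i → i < 3 → f^[i] x ≠ x) :
    ∀ n : ℕ, 1 ≤ n →
      ∃ y ∈ Set.Icc a b, f^[n] y = y ∧ ∀ i, 0 < i → i < n → f^[i] y ≠ y := by
  obtain ⟨x, hxmem, hx3, hxne⟩ := hx
  set x₁ := f x with hx₁
  set x₂ := f x₁ with hx₂
  have h3 : f x₂ = x := by
    have : f^[3] x = f (f (f x)) := rfl
    rw [this] at hx3
    exact hx3
  have hne1 : x ≠ x₁ := fun h => hxne 1 one_pos (by norm_num) (by simpa using h.symm)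
  have hne2 : x ≠ x₂ := fun h => hxne 2 two_pos (by norm_num)
    (by simp [Function.iterate_succ_apply, ← hx₂, ← hx₁, h.symm])
  have hne3 : x₁ ≠ x₂ := by
    intro h
    apply hne2
    calc x = f x₂ := h3.symm
      _ = f x₁ := by rw [h]
      _ = x₂ := hx₂.symm
  have hx₁mem : x₁ ∈ Set.Icc a b := hmaps hxmem
  have hx₂mem : x₂ ∈ Set.Icc a b := hmaps hx₁mem
  intro n hn
  rcases lt_trichotomy x x₁ with h01 | h01 | h01
  · rcases lt_trichotomy x₁ x₂ with h12 | h12 | h12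
    · -- x < x₁ < x₂ : standard
      exact period_main a b f hf hmaps x x₁ x₂ hxmem hx₂mem h01 h12 rfl rfl h3 n hn
    · exact absurd h12 hne3
    · rcases lt_trichotomy x x₂ with h02 | h02 | h02
      · -- x < x₂ < x₁ : mirror with (p,q,r) = (x, x₂, x₁)
        exact period_mainNeg a b f hf hmaps x x₂ x₁ hxmem hx₁mem h02 h12 rfl h3 rfl n hn
      · exact absurd h02 hne2
      · -- x₂ < x < x₁ : standard with (p,q,r) = (x₂, x, x₁)
        exact period_main a b f hf hmaps x₂ x x₁ hx₂mem hx₁mem h02 h01 h3 rfl rfl n hn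
  · exact absurd h01 hne1
  · rcases lt_trichotomy x₁ x₂ with h12 | h12 | h12
    · rcases lt_trichotomy x x₂ with h02 | h02 | h02
      · -- x₁ < x < x₂ : mirror with (p,q,r) = (x₁, x, x₂)
        exact period_mainNeg a b f hf hmaps x₁ x x₂ hx₁mem hx₂mem h01 h02 rfl rfl h3 n hn
      · exact absurd h02 hne2
      · -- x₁ < x₂ < x : standard with (p,q,r) = (x₁, x₂, x)
        exact period_main a b f hf hmaps x₁ x₂ x hx₁mem hxmem h12 h02 rfl h3 rfl n hn
    · exact absurd h12 hne3
    · -- x₂ < x₁ < x : mirror with (p,q,r) = (x₂, x₁, x)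
      exact period_mainNeg a b f hf hmaps x₂ x₁ x hx₂mem hxmem h12 h01 h3 rfl rfl n hn
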